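/- With N = 3f+1 total votes at a given height cast by a set NG of at least N-f nodes for branch B, any node collecting N-f votes of that height sees at least f+1 votes for branch B, which strictly exceeds the number f of votes it could see for any other single branch from nodes outside NG. -/
import Mathlib


theorem stmt_1 (N f : ℕ) (hN : N = 3 * f + 1)
    (NG S : Finset (Fin N))
    (hNG : N - f ≤ NG.card) (hS : S.card = N - f) :
    f + 1 ≤ (S ∩ NG).card ∧ (S \ NG).card ≤ f := by
  have h1 : (S ∪ NG).card + (S ∩ NG).card = S.card + NG.card :=
    Finset.card_union_add_card_inter S NG
  have h2 : (S ∪ NG).card ≤ N := by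
    simpa using Finset.card_le_univ (S ∪ NG)
  have h3 : (S \ NG).card + (S ∩ NG).card = S.card := Finset.card_sdiff_add_card_inter S NG
  omega
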